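/- Fix an integer N ≥ 2. For ξ ∈ (0,∞)^{2N−1}, let Ξ be the N×N lower bidiagonal matrix with diagonal entries √ξ_1, √ξ_3, …, √ξ_{2N−1} and subdiagonal entries Ξ_{n+1,n} = √ξ_{2n}, and define a_1 = ξ_1, a_n = ξ_{2n−2} + ξ_{2n−1} for 2 ≤ n ≤ N, and b_n = ξ_{2n−1} ξ_{2n} for 1 ≤ n ≤ N−1; then Ξ Ξᵀ = J_{a,b}. Conversely, if a ∈ ℝ^N and b ∈ (0,∞)^{N−1} are such that J_{a,b} is positive definite, then there is a unique ξ ∈ (0,∞)^{2N−1} with J_{a,b} = Ξ Ξᵀ for the above bidiagonal Ξ. Moreover, the polynomial map ξ ↦ (a_1,…,a_N, b_1,…,b_{N−1}) is injective and continuously differentiable on (0,∞)^{2N−1}, and at every point the absolute value of the determinant of its derivative equals ∏_{i=1}^{N−1} ξ_{2i−1}. -/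

import Mathlib

open MeasureTheory ProbabilityTheory Matrix Finset Real
open scoped ENNReal NNReal

noncomputable section

/-- The symmetric tridiagonal (Jacobi) matrix with diagonal `a` and
off-diagonal entries `√(b n)`. -/
def jacobiMatrix {N : ℕ} (a : Fin N → ℝ) (b : Fin (N - 1) → ℝ) :
    Matrix (Fin N) (Fin N) ℝ :=
  Matrix.of fun i j =>
    if i = j then a i
    else if h : (i : ℕ) + 1 = (j : ℕ) then
      Real.sqrt (b ⟨i, by have := j.isLt; omega⟩)
    else if h' : (j : ℕ) + 1 = (i : ℕ) then
      Real.sqrt (b ⟨j, by have := i.isLt; omega⟩)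
    else 0

lemma jacobiMatrix_isHermitian {N : ℕ} (a : Fin N → ℝ) (b : Fin (N - 1) → ℝ) :
    (jacobiMatrix a b).IsHermitian := by
  unfold Matrix.IsHermitian
  ext i j
  simp only [jacobiMatrix, Matrix.conjTranspose_apply, Matrix.of_apply, star_trivial]
  by_cases hij : i = j
  · subst hij; simp
  · have hji : j ≠ i := fun h => hij h.symm
    rw [if_neg hji, if_neg hij]
    by_cases h1 : (j : ℕ) + 1 = (i : ℕ)
    · have h2 : ¬((i : ℕ) + 1 = (j : ℕ)) := by omega
      rw [dif_pos h1, dif_neg h2, dif_pos h1]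
    · by_cases h2 : (i : ℕ) + 1 = (j : ℕ)
      · rw [dif_neg h1, dif_pos h2, dif_pos h2]
      · rw [dif_neg h1, dif_neg h2, dif_neg h2, dif_neg h1]

/-- Reordering of a finite tuple in decreasing order. -/
def sortDesc {N : ℕ} (v : Fin N → ℝ) : Fin N → ℝ :=
  fun i => v (Tuple.sort v (Fin.rev i))

/-- The eigenvalues of the Jacobi matrix `J_{a,b}`, in decreasing order. -/
def jacobiEigs {N : ℕ} (a : Fin N → ℝ) (b : Fin (N - 1) → ℝ) : Fin N → ℝ :=
  sortDesc (jacobiMatrix_isHermitian a b).eigenvalues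

/-- The squared first coordinates of unit eigenvectors of the Jacobi matrix `J_{a,b}`,
indexed compatibly with `jacobiEigs` (decreasing eigenvalue order):
`jacobiWeights hN a b i` is the squared first coordinate of a unit eigenvector
associated with the eigenvalue `jacobiEigs a b i`. -/
def jacobiWeights {N : ℕ} (hN : 0 < N) (a : Fin N → ℝ) (b : Fin (N - 1) → ℝ) :
    Fin N → ℝ :=
  fun i =>
    ((jacobiMatrix_isHermitian a b).eigenvectorBasis
        (Tuple.sort (jacobiMatrix_isHermitian a b).eigenvalues (Fin.rev i)) ⟨0, hN⟩) ^ 2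

/-- The spectral map: Jacobi data `(a, b)` is sent to the decreasingly ordered
eigenvalues together with the first `N - 1` spectral weights. -/
def spectralMap {N : ℕ} (hN : 0 < N) (a : Fin N → ℝ) (b : Fin (N - 1) → ℝ) :
    (Fin N → ℝ) × (Fin (N - 1) → ℝ) :=
  ⟨jacobiEigs a b, fun i => jacobiWeights hN a b ⟨i, by have := i.isLt; omega⟩⟩

/-- The Vandermonde product `∏_{i<j} (x j - x i)`. -/
def vdm {N : ℕ} (x : Fin N → ℝ) : ℝ :=
  ∏ i : Fin N, ∏ j ∈ Finset.Ioi i, (x j - x i)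

/-- The open chamber of decreasing vectors `x 0 > x 1 > … `. -/
def chamber (N : ℕ) : Set (Fin N → ℝ) := {x | ∀ i j : Fin N, i < j → x j < x i}

/-- The open simplex of positive weights with sum `< 1`. -/
def openSimplex (N : ℕ) : Set (Fin (N - 1) → ℝ) :=
  {w | (∀ i, 0 < w i) ∧ ∑ i, w i < 1}

/-- Extension of `N - 1` weights by the last weight `1 - ∑ w`. -/
def wExt {N : ℕ} (w : Fin (N - 1) → ℝ) : Fin N → ℝ :=
  fun n => if h : (n : ℕ) < N - 1 then w ⟨n, h⟩ else 1 - ∑ i, w i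

/-- The first `N` coordinates of a vector of length `2N - 1`. -/
def xPart {N : ℕ} (p : Fin (2 * N - 1) → ℝ) : Fin N → ℝ :=
  fun i => p ⟨i, by have := i.isLt; omega⟩

/-- The last `N - 1` coordinates of a vector of length `2N - 1`. -/
def wPart {N : ℕ} (p : Fin (2 * N - 1) → ℝ) : Fin (N - 1) → ℝ :=
  fun i => p ⟨N + i, by have := i.isLt; omega⟩

/-- The diagonal coefficients `a` built from the parameters `ξ`:
`a 1 = ξ 1`, `a n = ξ (2n-2) + ξ (2n-1)` (in one-based notation). -/
def xiToA {N : ℕ} (ξ : Fin (2 * N - 1) → ℝ) : Fin N → ℝ :=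
  fun n =>
    if h : (n : ℕ) = 0 then ξ ⟨0, by have := n.isLt; omega⟩
    else ξ ⟨2 * (n : ℕ) - 1, by have := n.isLt; omega⟩ +
      ξ ⟨2 * (n : ℕ), by have := n.isLt; omega⟩

/-- The off-diagonal coefficients `b` built from the parameters `ξ`:
`b n = ξ (2n-1) * ξ (2n)` (in one-based notation). -/
def xiToB {N : ℕ} (ξ : Fin (2 * N - 1) → ℝ) : Fin (N - 1) → ℝ :=
  fun n => ξ ⟨2 * (n : ℕ), by have := n.isLt; omega⟩ *
    ξ ⟨2 * (n : ℕ) + 1, by have := n.isLt; omega⟩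

/-- The chain-sequence parameters `ξ` built from canonical moments `c`:
`ξ 1 = c 1` and `ξ n = (1 - c (n-1)) * c n` (in one-based notation). -/
def cToXi {N : ℕ} (c : Fin (2 * N - 1) → ℝ) : Fin (2 * N - 1) → ℝ :=
  fun k =>
    if (k : ℕ) = 0 then c k
    else (1 - c ⟨(k : ℕ) - 1, by have := k.isLt; omega⟩) * c k

/-- The lower bidiagonal matrix `Ξ` with diagonal `√ξ 1, √ξ 3, …` and
subdiagonal `√ξ 2, √ξ 4, …` (in one-based notation). -/
def bidiag {N : ℕ} (ξ : Fin (2 * N - 1) → ℝ) : Matrix (Fin N) (Fin N) ℝ :=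
  Matrix.of fun i j =>
    if i = j then Real.sqrt (ξ ⟨2 * (i : ℕ), by have := i.isLt; omega⟩)
    else if h : (j : ℕ) + 1 = (i : ℕ) then
      Real.sqrt (ξ ⟨2 * (j : ℕ) + 1, by have := i.isLt; omega⟩)
    else 0

lemma mul_transpose_isHermitian {N : ℕ} (A : Matrix (Fin N) (Fin N) ℝ) :
    (A * Aᵀ).IsHermitian := by
  unfold Matrix.IsHermitian
  ext i j
  simp [Matrix.mul_apply, Matrix.conjTranspose_apply, Matrix.transpose_apply, mul_comm]

/-- The map from the parameters `ξ` to the rolled-up Jacobi data `(a, b)`. -/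
def xiToAB (N : ℕ) (ξ : Fin (2 * N - 1) → ℝ) : Fin (2 * N - 1) → ℝ :=
  fun k =>
    if h : (k : ℕ) < N then xiToA ξ ⟨k, h⟩
    else xiToB ξ ⟨(k : ℕ) - N, by have := k.isLt; omega⟩

lemma bidiag_eq_zero {N : ℕ} (ξ : Fin (2 * N - 1) → ℝ) {i k : Fin N}
    (h1 : i ≠ k) (h2 : (k : ℕ) + 1 ≠ (i : ℕ)) : bidiag ξ i k = 0 := by
  simp [bidiag, h1, h2]

lemma bidiag_diag {N : ℕ} (ξ : Fin (2 * N - 1) → ℝ) (i : Fin N) :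
    bidiag ξ i i = Real.sqrt (ξ ⟨2 * (i : ℕ), by have := i.isLt; omega⟩) := by
  simp [bidiag]

lemma bidiag_sub {N : ℕ} (ξ : Fin (2 * N - 1) → ℝ) {i k : Fin N}
    (h : (k : ℕ) + 1 = (i : ℕ)) :
    bidiag ξ i k = Real.sqrt (ξ ⟨2 * (k : ℕ) + 1, by have := i.isLt; omega⟩) := by
  have hne : i ≠ k := by intro e; rw [e] at h; omega
  simp [bidiag, hne, h]

lemma xi_congr {N : ℕ} (ξ : Fin (2 * N - 1) → ℝ) {x y : ℕ} (hx : x < 2 * N - 1)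
    (hy : y < 2 * N - 1) (h : x = y) : ξ ⟨x, hx⟩ = ξ ⟨y, hy⟩ := by subst h; rfl

lemma bidiag_mul_transpose {N : ℕ} (ξ : Fin (2 * N - 1) → ℝ) (hξ : ∀ i, 0 ≤ ξ i) :
    bidiag ξ * (bidiag ξ)ᵀ = jacobiMatrix (xiToA ξ) (xiToB ξ) := by
  ext i j
  rw [Matrix.mul_apply]
  simp only [Matrix.transpose_apply]
  by_cases hij : i = j
  · subst hij
    have hrhs : jacobiMatrix (xiToA ξ) (xiToB ξ) i i = xiToA ξ i := by
      simp [jacobiMatrix]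
    rw [hrhs]
    by_cases h0 : (i : ℕ) = 0
    · rw [Finset.sum_eq_single i]
      · rw [bidiag_diag, Real.mul_self_sqrt (hξ _)]
        rw [xiToA]; rw [dif_pos h0]
        exact xi_congr ξ _ _ (by omega)
      · intro k _ hk
        rw [bidiag_eq_zero ξ (Ne.symm hk) (by omega)]
        ring
      · intro h; exact absurd (Finset.mem_univ i) h
    · -- two terms: k = i and k = pred i
      have hi1 : (i : ℕ) - 1 < N := by have := i.isLt; omega
      set i' : Fin N := ⟨(i : ℕ) - 1, hi1⟩ with hi'
      have hne : i ≠ i' := by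
        intro e
        have : (i : ℕ) = (i : ℕ) - 1 := congrArg Fin.val e
        omega
      rw [Finset.sum_eq_add_of_mem i i' (Finset.mem_univ _) (Finset.mem_univ _) hne]
      · have hsub : ((i' : Fin N) : ℕ) + 1 = (i : ℕ) := by simp [hi']; omega
        rw [bidiag_diag, bidiag_sub ξ hsub, Real.mul_self_sqrt (hξ _),
          Real.mul_self_sqrt (hξ _)]
        rw [xiToA]; rw [dif_neg h0]
        rw [add_comm]
        congr 1
        · exact xi_congr ξ _ _ (by simp [hi']; omega)
      · intro k _ hk
        rw [bidiag_eq_zero ξ (Ne.symm hk.1) (by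
          intro e
          apply hk.2
          apply Fin.ext
          simp [hi']; omega)]
        ring
  · -- off-diagonal
    by_cases h1 : (i : ℕ) + 1 = (j : ℕ)
    · have hrhs : jacobiMatrix (xiToA ξ) (xiToB ξ) i j
          = Real.sqrt (xiToB ξ ⟨i, by have := j.isLt; omega⟩) := by
        simp only [jacobiMatrix, Matrix.of_apply, if_neg hij, dif_pos h1]
      rw [hrhs]
      rw [Finset.sum_eq_single i]
      · have hsub : ((i : Fin N) : ℕ) + 1 = (j : ℕ) := h1
        rw [bidiag_diag, bidiag_sub ξ hsub]
        rw [← Real.sqrt_mul (hξ _)]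
        rw [xiToB]
      · intro k _ hk
        by_cases hk1 : (k : ℕ) + 1 = (i : ℕ)
        · have hz : bidiag ξ j k = 0 := by
            apply bidiag_eq_zero ξ
            · intro e; have := congrArg Fin.val e; omega
            · omega
          rw [hz]; ring
        · rw [bidiag_eq_zero ξ (Ne.symm hk) hk1]; ring
      · intro h; exact absurd (Finset.mem_univ i) h
    · by_cases h2 : (j : ℕ) + 1 = (i : ℕ)
      · have hrhs : jacobiMatrix (xiToA ξ) (xiToB ξ) i j
            = Real.sqrt (xiToB ξ ⟨j, by have := i.isLt; omega⟩) := by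
          simp only [jacobiMatrix, Matrix.of_apply, if_neg hij, dif_neg h1, dif_pos h2]
        rw [hrhs]
        rw [Finset.sum_eq_single j]
        · rw [bidiag_diag, bidiag_sub ξ h2]
          rw [← Real.sqrt_mul (hξ _)]
          rw [xiToB]
          rw [mul_comm] -- check orientation
        · intro k _ hk
          by_cases hk1 : (k : ℕ) + 1 = (j : ℕ)
          · have hz : bidiag ξ i k = 0 := by
              apply bidiag_eq_zero ξ
              · intro e; have := congrArg Fin.val e; omega
              · omega
            rw [hz]; ring
          · rw [bidiag_eq_zero ξ (Ne.symm hk) (by omega)]; ring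
        · intro h; exact absurd (Finset.mem_univ j) h
      · have hrhs : jacobiMatrix (xiToA ξ) (xiToB ξ) i j = 0 := by
          simp only [jacobiMatrix, Matrix.of_apply, if_neg hij, dif_neg h1, dif_neg h2]
        rw [hrhs]
        apply Finset.sum_eq_zero
        intro k _
        have hvi : (i : ℕ) ≠ (j : ℕ) := fun e => hij (Fin.ext e)
        by_cases hki : (k : ℕ) = (i : ℕ) ∨ (k : ℕ) + 1 = (i : ℕ)
        · have : bidiag ξ j k = 0 := by
            apply bidiag_eq_zero ξ
            · intro e; have := congrArg Fin.val e; omega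
            · omega
          rw [this]; ring
        · have : bidiag ξ i k = 0 := by
            apply bidiag_eq_zero ξ
            · intro e; have := congrArg Fin.val e; omega
            · omega
          rw [this]; ring

def aExt {N : ℕ} (a : Fin N → ℝ) : ℕ → ℝ := fun n => if h : n < N then a ⟨n, h⟩ else 0

def bExt {N : ℕ} (b : Fin (N - 1) → ℝ) : ℕ → ℝ := fun n => if h : n < N - 1 then b ⟨n, h⟩ else 0

def dSeq (a b : ℕ → ℝ) : ℕ → ℝ
  | 0 => a 0
  | n + 1 => a (n + 1) - b n / dSeq a b n

def eSeq (a b : ℕ → ℝ) (n : ℕ) : ℝ := b n / dSeq a b n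

def jN (a b : ℕ → ℝ) : ℕ → ℕ → ℝ := fun i j =>
  if i = j then a i
  else if i + 1 = j then Real.sqrt (b i)
  else if j + 1 = i then Real.sqrt (b j)
  else 0

lemma jN_symm (a b : ℕ → ℝ) (i j : ℕ) : jN a b i j = jN a b j i := by
  unfold jN
  by_cases h : i = j
  · subst h; simp
  · have h' : ¬ j = i := fun e => h e.symm
    rw [if_neg h, if_neg h']
    by_cases h1 : i + 1 = j
    · rw [if_pos h1, if_neg (by omega), if_pos h1]
    · by_cases h2 : j + 1 = i
      · rw [if_neg h1, if_pos h2, if_pos h2]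
      · rw [if_neg h1, if_neg h2, if_neg h2, if_neg h1]

lemma jN_zero (a b : ℕ → ℝ) {i j : ℕ} (h1 : i ≠ j) (h2 : i + 1 ≠ j) (h3 : j + 1 ≠ i) :
    jN a b i j = 0 := by
  unfold jN; rw [if_neg h1, if_neg h2, if_neg h3]

lemma quadform_eq (a b v : ℕ → ℝ) (n : ℕ) :
    ∑ i ∈ Finset.range n, ∑ j ∈ Finset.range n, v i * jN a b i j * v j
      = ∑ i ∈ Finset.range n, a i * v i ^ 2
        + 2 * ∑ i ∈ Finset.range (n - 1), Real.sqrt (b i) * v i * v (i + 1) := by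
  induction n with
  | zero => simp
  | succ n ih =>
    simp only [Finset.sum_range_succ]
    rw [Finset.sum_add_distrib, ih]
    have hdiag : v n * jN a b n n * v n = a n * v n ^ 2 := by
      unfold jN; simp; ring
    rcases Nat.eq_zero_or_pos n with hn | hn
    · subst hn; simp [hdiag]
    · obtain ⟨m, rfl⟩ : ∃ m, n = m + 1 := ⟨n - 1, by omega⟩
      have hval : jN a b m (m + 1) = Real.sqrt (b m) := by
        unfold jN; rw [if_neg (by omega), if_pos rfl]
      have hcol : ∑ i ∈ Finset.range (m + 1), v i * jN a b i (m + 1) * v (m + 1)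
          = v m * Real.sqrt (b m) * v (m + 1) := by
        rw [Finset.sum_eq_single_of_mem m (Finset.self_mem_range_succ m)]
        · rw [hval]
        · intro i hi hne
          have hi2 := Finset.mem_range.mp hi
          rw [jN_zero a b (by omega) (by omega) (by omega)]
          ring
      have hrow : ∑ j ∈ Finset.range (m + 1), v (m + 1) * jN a b (m + 1) j * v j
          = v (m + 1) * Real.sqrt (b m) * v m := by
        rw [Finset.sum_eq_single_of_mem m (Finset.self_mem_range_succ m)]
        · rw [jN_symm, hval]
        · intro i hi hne
          have hi2 := Finset.mem_range.mp hi
          rw [jN_symm, jN_zero a b (by omega) (by omega) (by omega)]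
          ring
      rw [hcol, hrow, hdiag]
      have : (m + 1 + 1 - 1) = m + 1 := by omega
      rw [this]
      have : (m + 1 - 1) = m := by omega
      rw [this]
      rw [Finset.sum_range_succ (fun i => Real.sqrt (b i) * v i * v (i + 1)) m]
      ring

lemma jacobi_eq_jN {N : ℕ} (a : Fin N → ℝ) (b : Fin (N - 1) → ℝ) (i j : Fin N) :
    jacobiMatrix a b i j = jN (aExt a) (bExt b) (i : ℕ) (j : ℕ) := by
  unfold jacobiMatrix jN aExt bExt
  simp only [Matrix.of_apply]
  by_cases h : i = j
  · subst h; rw [if_pos rfl, if_pos rfl, dif_pos i.isLt]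
  · have hv : (i : ℕ) ≠ (j : ℕ) := fun e => h (Fin.ext e)
    rw [if_neg h, if_neg hv]
    by_cases h1 : (i : ℕ) + 1 = (j : ℕ)
    · rw [dif_pos h1, if_pos h1, dif_pos (by have := j.isLt; omega : (i:ℕ) < N - 1)]
    · rw [dif_neg h1, if_neg h1]
      by_cases h2 : (j : ℕ) + 1 = (i : ℕ)
      · rw [dif_pos h2, if_pos h2, dif_pos (by have := i.isLt; omega : (j:ℕ) < N - 1)]
      · rw [dif_neg h2, if_neg h2]

lemma quadform_fin {N : ℕ} (a : Fin N → ℝ) (b : Fin (N - 1) → ℝ) (v : ℕ → ℝ) :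
    (fun i : Fin N => v i) ⬝ᵥ (jacobiMatrix a b *ᵥ fun i : Fin N => v i)
      = ∑ i ∈ Finset.range N, ∑ j ∈ Finset.range N,
          v i * jN (aExt a) (bExt b) i j * v j := by
  have hrow : ∀ i : Fin N, (jacobiMatrix a b *ᵥ fun k : Fin N => v k) i
      = ∑ j ∈ Finset.range N, jN (aExt a) (bExt b) (i : ℕ) j * v j := by
    intro i
    rw [Matrix.mulVec, dotProduct]
    rw [← Fin.sum_univ_eq_sum_range (fun j => jN (aExt a) (bExt b) (i : ℕ) j * v j) N]
    exact Finset.sum_congr rfl fun j _ => by rw [jacobi_eq_jN]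
  rw [dotProduct]
  rw [← Fin.sum_univ_eq_sum_range
    (fun i => ∑ j ∈ Finset.range N, v i * jN (aExt a) (bExt b) i j * v j) N]
  refine Finset.sum_congr rfl fun i _ => ?_
  rw [hrow i, Finset.mul_sum]
  exact Finset.sum_congr rfl fun j _ => by ring

def uVec (A B : ℕ → ℝ) (n : ℕ) : ℕ → ℝ :=
  fun i => if i ≤ n then
    ∏ j ∈ Finset.Ico i n, (-(Real.sqrt (eSeq A B j) / Real.sqrt (dSeq A B j)))
  else 0

lemma uVec_last (A B : ℕ → ℝ) (n : ℕ) : uVec A B n n = 1 := by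
  simp [uVec]

lemma uVec_zero (A B : ℕ → ℝ) {n i : ℕ} (h : n < i) : uVec A B n i = 0 :=
  if_neg (by omega)

lemma uVec_step (A B : ℕ → ℝ) {n i : ℕ} (h : i < n) :
    uVec A B n i = -(Real.sqrt (eSeq A B i) / Real.sqrt (dSeq A B i)) * uVec A B n (i + 1) := by
  unfold uVec
  rw [if_pos (by omega : i ≤ n), if_pos (by omega : i + 1 ≤ n)]
  exact Finset.prod_eq_prod_Ico_succ_bot h _

lemma telescope (A B : ℕ → ℝ) (n : ℕ)
    (hd : ∀ k, k < n → 0 < dSeq A B k) (hB : ∀ k, k < n → 0 < B k) :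
    ∀ t, t ≤ n →
      ∑ i ∈ Finset.range (t + 1), A i * uVec A B n i ^ 2
        + 2 * ∑ i ∈ Finset.range t, Real.sqrt (B i) * uVec A B n i * uVec A B n (i + 1)
      = dSeq A B t * uVec A B n t ^ 2 := by
  intro t
  induction t with
  | zero => intro _; simp [dSeq]
  | succ t iht =>
    intro ht
    have htn : t < n := by omega
    rw [Finset.sum_range_succ (fun i => A i * uVec A B n i ^ 2) (t + 1),
        Finset.sum_range_succ (fun i => Real.sqrt (B i) * uVec A B n i * uVec A B n (i + 1)) t]
    have hdt := hd t htn
    have hBt := hB t htn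
    have het : 0 < eSeq A B t := div_pos hBt hdt
    set dt := dSeq A B t with hdt_def
    set et := eSeq A B t with het_def
    set u1 := uVec A B n (t + 1) with hu1
    have hu : uVec A B n t = -(Real.sqrt et / Real.sqrt dt) * u1 := uVec_step A B htn
    have hsq : uVec A B n t ^ 2 = (et / dt) * u1 ^ 2 := by
      rw [hu]
      rw [neg_mul, neg_pow, mul_pow, div_pow, Real.sq_sqrt het.le, Real.sq_sqrt hdt.le]
      ring
    have h1 : dt * uVec A B n t ^ 2 = et * u1 ^ 2 := by
      rw [hsq]; field_simp
    have hBdt : B t = dt * et := by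
      rw [het_def]; unfold eSeq; rw [← hdt_def]; field_simp
    have h2 : Real.sqrt (B t) * uVec A B n t * u1 = -(et * u1 ^ 2) := by
      rw [hBdt, Real.sqrt_mul hdt.le, hu]
      have hsd : Real.sqrt dt ≠ 0 := (Real.sqrt_pos.mpr hdt).ne'
      field_simp
      rw [Real.sq_sqrt het.le]
      ring
    have h3 : A (t + 1) = dSeq A B (t + 1) + et := by
      show A (t + 1) = (A (t + 1) - B t / dt) + et
      rw [het_def]; unfold eSeq; rw [← hdt_def]; ring
    linear_combination iht (by omega) + h1 + 2 * h2 + u1 ^ 2 * h3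

lemma dSeq_pos {N : ℕ} (a : Fin N → ℝ) (b : Fin (N - 1) → ℝ) (hb : ∀ i, 0 < b i)
    (hJ : (jacobiMatrix a b).PosDef) : ∀ n, n < N → 0 < dSeq (aExt a) (bExt b) n := by
  intro n
  induction n using Nat.strong_induction_on with
  | _ n ih =>
    intro hnN
    set A := aExt a with hA
    set B := bExt b with hB
    have hBpos : ∀ k, k < n → 0 < B k := by
      intro k hk
      rw [hB]; unfold bExt
      rw [dif_pos (by omega : k < N - 1)]
      exact hb _
    have hu := telescope A B n (fun k hk => ih k hk (by omega)) hBpos n le_rfl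
    have hQ := quadform_fin a b (uVec A B n)
    rw [quadform_eq] at hQ
    have hu0 : ∀ i, n < i → uVec A B n i = 0 := fun i hi => uVec_zero A B hi
    have h1 : ∑ i ∈ Finset.range N, A i * uVec A B n i ^ 2
        = ∑ i ∈ Finset.range (n + 1), A i * uVec A B n i ^ 2 := by
      rw [← Finset.sum_subset (Finset.range_subset_range.mpr (by omega : n + 1 ≤ N))]
      intro x hx hnx
      rw [hu0 x (by simp [Finset.mem_range] at hnx ⊢; omega)]
      ring
    have h2 : ∑ i ∈ Finset.range (N - 1), Real.sqrt (B i) * uVec A B n i * uVec A B n (i + 1)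
        = ∑ i ∈ Finset.range n, Real.sqrt (B i) * uVec A B n i * uVec A B n (i + 1) := by
      rw [← Finset.sum_subset (Finset.range_subset_range.mpr (by omega : n ≤ N - 1))]
      intro x hx hnx
      rw [hu0 (x + 1) (by simp [Finset.mem_range] at hnx ⊢; omega)]
      ring
    rw [h1, h2, hu, uVec_last, one_pow, mul_one] at hQ
    have hne : (fun i : Fin N => uVec A B n i) ≠ 0 := by
      intro h
      have := congrFun h ⟨n, hnN⟩
      rw [show ((⟨n, hnN⟩ : Fin N) : ℕ) = n from rfl, uVec_last] at this
      simpa using this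
    have hpos := hJ.dotProduct_mulVec_pos hne
    rw [← hQ]
    simp at hpos
    exact hpos

def xiOf (A B : ℕ → ℝ) : ℕ → ℝ :=
  fun k => if k % 2 = 0 then dSeq A B (k / 2) else eSeq A B (k / 2)

lemma xiOf_even (A B : ℕ → ℝ) (m : ℕ) : xiOf A B (2 * m) = dSeq A B m := by
  unfold xiOf; rw [if_pos (by omega)]; congr 1; omega

lemma xiOf_odd (A B : ℕ → ℝ) (m : ℕ) : xiOf A B (2 * m + 1) = eSeq A B m := by
  unfold xiOf; rw [if_neg (by omega)]; congr 1; omega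

lemma xiOf_pos {N : ℕ} (hN : 2 ≤ N) (a : Fin N → ℝ) (b : Fin (N - 1) → ℝ)
    (hb : ∀ i, 0 < b i) (hd : ∀ n, n < N → 0 < dSeq (aExt a) (bExt b) n) :
    ∀ k : Fin (2 * N - 1), 0 < xiOf (aExt a) (bExt b) (k : ℕ) := by
  intro k
  have hk := k.isLt
  rcases Nat.even_or_odd (k : ℕ) with ⟨m, hm⟩ | ⟨m, hm⟩
  · rw [show (k : ℕ) = 2 * m from by omega, xiOf_even]
    exact hd m (by omega)
  · rw [show (k : ℕ) = 2 * m + 1 from by omega, xiOf_odd]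
    unfold eSeq
    apply div_pos
    · unfold bExt; rw [dif_pos (by omega : m < N - 1)]; exact hb _
    · exact hd m (by omega)

lemma xiToA_xiOf {N : ℕ} (hN : 2 ≤ N) (a : Fin N → ℝ) (b : Fin (N - 1) → ℝ) :
    xiToA (fun k : Fin (2 * N - 1) => xiOf (aExt a) (bExt b) (k : ℕ)) = a := by
  funext n
  unfold xiToA
  by_cases h0 : (n : ℕ) = 0
  · rw [dif_pos h0]
    show xiOf (aExt a) (bExt b) 0 = a n
    rw [show (0 : ℕ) = 2 * 0 from rfl, xiOf_even]
    show aExt a 0 = a n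
    unfold aExt
    rw [dif_pos (by omega : 0 < N)]
    congr 1
    exact Fin.ext (by simp; omega)
  · rw [dif_neg h0]
    obtain ⟨m, hm⟩ : ∃ m, (n : ℕ) = m + 1 := ⟨(n : ℕ) - 1, by omega⟩
    show xiOf (aExt a) (bExt b) (2 * (n : ℕ) - 1) + xiOf (aExt a) (bExt b) (2 * (n : ℕ)) = a n
    rw [show 2 * (n : ℕ) - 1 = 2 * m + 1 from by omega,
        show 2 * (n : ℕ) = 2 * (m + 1) from by omega, xiOf_odd, xiOf_even]
    have hstep : eSeq (aExt a) (bExt b) m + dSeq (aExt a) (bExt b) (m + 1) = aExt a (m + 1) := by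
      show eSeq (aExt a) (bExt b) m + (aExt a (m + 1) - bExt b m / dSeq (aExt a) (bExt b) m) = _
      unfold eSeq; ring
    rw [hstep]
    unfold aExt
    rw [dif_pos (by have := n.isLt; omega : m + 1 < N)]
    congr 1
    exact Fin.ext (by simp; omega)

lemma xiToB_xiOf {N : ℕ} (hN : 2 ≤ N) (a : Fin N → ℝ) (b : Fin (N - 1) → ℝ)
    (hd : ∀ n, n < N → 0 < dSeq (aExt a) (bExt b) n) :
    xiToB (fun k : Fin (2 * N - 1) => xiOf (aExt a) (bExt b) (k : ℕ)) = b := by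
  funext n
  have hn := n.isLt
  show xiOf (aExt a) (bExt b) (2 * (n : ℕ)) * xiOf (aExt a) (bExt b) (2 * (n : ℕ) + 1) = b n
  rw [xiOf_even, xiOf_odd]
  unfold eSeq
  rw [mul_comm, div_mul_cancel₀ _ (hd (n : ℕ) (by omega)).ne']
  unfold bExt
  rw [dif_pos (by omega : (n : ℕ) < N - 1)]

lemma xi_inj {N : ℕ} {ξ ξ' : Fin (2 * N - 1) → ℝ} (hξ : ∀ i, 0 < ξ i)
    (hA : xiToA ξ = xiToA ξ') (hB : xiToB ξ = xiToB ξ') : ξ = ξ' := by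
  have key : ∀ m, ∀ h : m < 2 * N - 1, ξ ⟨m, h⟩ = ξ' ⟨m, h⟩ := by
    intro m
    induction m using Nat.strong_induction_on with
    | _ m ih =>
      intro hm
      rcases Nat.even_or_odd m with ⟨t, hmt⟩ | ⟨t, hmt⟩
      · rcases Nat.eq_zero_or_pos t with ht0 | ht0
        · have hm0 : m = 0 := by omega
          have := congrFun hA ⟨0, by omega⟩
          unfold xiToA at this
          rw [dif_pos rfl, dif_pos rfl] at this
          subst hm0
          exact this
        · -- m = 2t, t ≥ 1
          have := congrFun hA ⟨t, by omega⟩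
          unfold xiToA at this
          rw [dif_neg (by simpa using (by omega : ¬ t = 0)), dif_neg (by simpa using (by omega : ¬ t = 0))] at this
          have hprev : ξ ⟨2 * t - 1, by omega⟩ = ξ' ⟨2 * t - 1, by omega⟩ := ih (2 * t - 1) (by omega) (by omega)
          have h2 : ξ ⟨2 * t, by omega⟩ = ξ' ⟨2 * t, by omega⟩ := by
            have h3 : ξ ⟨2 * t - 1, by omega⟩ + ξ ⟨2 * t, by omega⟩
                = ξ' ⟨2 * t - 1, by omega⟩ + ξ' ⟨2 * t, by omega⟩ := this
            rw [hprev] at h3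
            exact add_left_cancel h3
          have hmk : (⟨m, hm⟩ : Fin (2 * N - 1)) = ⟨2 * t, by omega⟩ := Fin.ext (by simp; omega)
          rw [hmk]; exact h2
      · -- m = 2t + 1
        have := congrFun hB ⟨t, by omega⟩
        unfold xiToB at this
        have hprev : ξ ⟨2 * t, by omega⟩ = ξ' ⟨2 * t, by omega⟩ := ih (2 * t) (by omega) (by omega)
        have hne : (ξ ⟨2 * t, by omega⟩ : ℝ) ≠ 0 := (hξ _).ne'
        have h2 : ξ ⟨2 * t + 1, by omega⟩ = ξ' ⟨2 * t + 1, by omega⟩ := by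
          apply mul_left_cancel₀ hne
          calc ξ ⟨2 * t, by omega⟩ * ξ ⟨2 * t + 1, by omega⟩
              = ξ' ⟨2 * t, by omega⟩ * ξ' ⟨2 * t + 1, by omega⟩ := this
            _ = ξ ⟨2 * t, by omega⟩ * ξ' ⟨2 * t + 1, by omega⟩ := by rw [hprev]
        have hmk : (⟨m, hm⟩ : Fin (2 * N - 1)) = ⟨2 * t + 1, by omega⟩ := Fin.ext (by simp; omega)
        rw [hmk]; exact h2
  funext k
  have := key (k : ℕ) k.isLt
  simpa using this

lemma jacobi_inj {N : ℕ} {a a' : Fin N → ℝ} {b b' : Fin (N - 1) → ℝ}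
    (hb : ∀ i, 0 ≤ b i) (hb' : ∀ i, 0 ≤ b' i)
    (h : jacobiMatrix a b = jacobiMatrix a' b') : a = a' ∧ b = b' := by
  constructor
  · funext i
    have := congrFun (congrFun h i) i
    simpa [jacobiMatrix] using this
  · funext i
    have hi : (i : ℕ) < N - 1 := i.isLt
    have key : Real.sqrt (b i) = Real.sqrt (b' i) := by
      have hne : (⟨(i : ℕ), by omega⟩ : Fin N) ≠ ⟨(i : ℕ) + 1, by omega⟩ := by
        intro e; have := congrArg Fin.val e; simp at this
      have h1 := congrFun (congrFun h ⟨(i : ℕ), by omega⟩) ⟨(i : ℕ) + 1, by omega⟩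
      unfold jacobiMatrix at h1
      simp only [Matrix.of_apply, if_neg hne, Fin.val_mk] at h1
      exact h1
    have h2 := congrArg (fun x : ℝ => x ^ 2) key
    rwa [Real.sq_sqrt (hb _), Real.sq_sqrt (hb' _)] at h2

lemma proj_contDiff {M : ℕ} (p : Fin M) : ContDiff ℝ 1 (fun ξ : Fin M → ℝ => ξ p) :=
  (ContinuousLinearMap.proj (R := ℝ) (φ := fun _ : Fin M => ℝ) p).contDiff

lemma proj_hasFDerivAt {M : ℕ} (p : Fin M) (x : Fin M → ℝ) :
    HasFDerivAt (fun ξ : Fin M → ℝ => ξ p)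
      (ContinuousLinearMap.proj p : (Fin M → ℝ) →L[ℝ] ℝ) x :=
  (ContinuousLinearMap.proj (R := ℝ) (φ := fun _ : Fin M => ℝ) p).hasFDerivAt

lemma xiToAB_contDiff (N : ℕ) (hN : 2 ≤ N) : ContDiff ℝ 1 (xiToAB N) := by
  apply contDiff_pi.mpr
  intro k
  have hk2 := k.isLt
  by_cases hk : (k : ℕ) < N
  · by_cases h0 : (k : ℕ) = 0
    · have hfun : (fun ξ : Fin (2 * N - 1) → ℝ => xiToAB N ξ k)
          = fun ξ => ξ ⟨0, by omega⟩ := by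
        funext ξ; unfold xiToAB xiToA; rw [dif_pos hk, dif_pos h0]
      rw [hfun]
      exact proj_contDiff (⟨0, by omega⟩ : Fin (2 * N - 1))
    · have hfun : (fun ξ : Fin (2 * N - 1) → ℝ => xiToAB N ξ k)
          = fun ξ => ξ ⟨2 * (k : ℕ) - 1, by omega⟩ + ξ ⟨2 * (k : ℕ), by omega⟩ := by
        funext ξ; unfold xiToAB xiToA; rw [dif_pos hk, dif_neg h0]
      rw [hfun]
      exact (proj_contDiff (⟨2 * (k : ℕ) - 1, by omega⟩ : Fin (2 * N - 1))).add
        (proj_contDiff (⟨2 * (k : ℕ), by omega⟩ : Fin (2 * N - 1)))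
  · have hfun : (fun ξ : Fin (2 * N - 1) → ℝ => xiToAB N ξ k)
        = fun ξ => ξ ⟨2 * ((k : ℕ) - N), by omega⟩ * ξ ⟨2 * ((k : ℕ) - N) + 1, by omega⟩ := by
      funext ξ; unfold xiToAB xiToB; rw [dif_neg hk]
    rw [hfun]
    exact (proj_contDiff (⟨2 * ((k : ℕ) - N), by omega⟩ : Fin (2 * N - 1))).mul
      (proj_contDiff (⟨2 * ((k : ℕ) - N) + 1, by omega⟩ : Fin (2 * N - 1)))

def jmat {N : ℕ} (ξ : Fin (2 * N - 1) → ℝ) :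
    Matrix (Fin (2 * N - 1)) (Fin (2 * N - 1)) ℝ :=
  Matrix.of fun k l =>
    if hk : (k : ℕ) < N then
      (if (k : ℕ) = 0 then (if (l : ℕ) = 0 then 1 else 0)
       else if (l : ℕ) = 2 * (k : ℕ) - 1 ∨ (l : ℕ) = 2 * (k : ℕ) then 1 else 0)
    else
      (if (l : ℕ) = 2 * ((k : ℕ) - N) then ξ ⟨2 * ((k : ℕ) - N) + 1, by have := k.isLt; omega⟩
       else if (l : ℕ) = 2 * ((k : ℕ) - N) + 1 then ξ ⟨2 * ((k : ℕ) - N), by have := k.isLt; omega⟩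
       else 0)

lemma jmat_row0 {N : ℕ} (ξ : Fin (2 * N - 1) → ℝ) {k : Fin (2 * N - 1)} (l : Fin (2 * N - 1))
    (hk : (k : ℕ) < N) (h0 : (k : ℕ) = 0) :
    jmat ξ k l = if (l : ℕ) = 0 then 1 else 0 := by
  unfold jmat; simp only [Matrix.of_apply]; rw [dif_pos hk, if_pos h0]

lemma jmat_rowA {N : ℕ} (ξ : Fin (2 * N - 1) → ℝ) {k : Fin (2 * N - 1)} (l : Fin (2 * N - 1))
    (hk : (k : ℕ) < N) (h0 : ¬ (k : ℕ) = 0) :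
    jmat ξ k l = if (l : ℕ) = 2 * (k : ℕ) - 1 ∨ (l : ℕ) = 2 * (k : ℕ) then 1 else 0 := by
  unfold jmat; simp only [Matrix.of_apply]; rw [dif_pos hk, if_neg h0]

lemma jmat_rowB {N : ℕ} (ξ : Fin (2 * N - 1) → ℝ) {k : Fin (2 * N - 1)} (l : Fin (2 * N - 1))
    (hk : ¬ (k : ℕ) < N) :
    jmat ξ k l = (if (l : ℕ) = 2 * ((k : ℕ) - N)
        then ξ ⟨2 * ((k : ℕ) - N) + 1, by have := k.isLt; omega⟩
      else if (l : ℕ) = 2 * ((k : ℕ) - N) + 1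
        then ξ ⟨2 * ((k : ℕ) - N), by have := k.isLt; omega⟩
      else 0) := by
  unfold jmat; simp only [Matrix.of_apply]; rw [dif_neg hk]

lemma xiToAB_hasFDerivAt {N : ℕ} (hN : 2 ≤ N) (ξ : Fin (2 * N - 1) → ℝ) :
    HasFDerivAt (xiToAB N)
      (LinearMap.toContinuousLinearMap (Matrix.toLin' (jmat ξ))) ξ := by
  set L := LinearMap.toContinuousLinearMap (Matrix.toLin' (jmat ξ)) with hL
  have happ : ∀ (v : Fin (2 * N - 1) → ℝ) (k : Fin (2 * N - 1)),
      L v k = ∑ l : Fin (2 * N - 1), jmat ξ k l * v l := by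
    intro v k
    rw [hL]
    rw [show (LinearMap.toContinuousLinearMap (Matrix.toLin' (jmat ξ))) v
        = (Matrix.toLin' (jmat ξ)) v from congrFun (LinearMap.coe_toContinuousLinearMap' _) v]
    rw [Matrix.toLin'_apply]
    rfl
  rw [hasFDerivAt_pi']
  intro k
  have hk2 := k.isLt
  by_cases hk : (k : ℕ) < N
  · by_cases h0 : (k : ℕ) = 0
    · have hfun : (fun x : Fin (2 * N - 1) → ℝ => xiToAB N x k)
          = fun x => x ⟨0, by omega⟩ := by
        funext x; unfold xiToAB xiToA; rw [dif_pos hk, dif_pos h0]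
      rw [hfun]
      have hCLM : (ContinuousLinearMap.proj k).comp L
          = ContinuousLinearMap.proj (R := ℝ) (⟨0, by omega⟩ : Fin (2 * N - 1)) := by
        ext v
        simp only [ContinuousLinearMap.comp_apply, ContinuousLinearMap.proj_apply]
        rw [happ]
        rw [Finset.sum_eq_single (⟨0, by omega⟩ : Fin (2 * N - 1))]
        · rw [jmat_row0 ξ _ hk h0, if_pos (show ((⟨0, by omega⟩ : Fin (2 * N - 1)) : ℕ) = 0 from rfl), one_mul]
        · intro l _ hl
          rw [jmat_row0 ξ _ hk h0, if_neg (fun e => hl (Fin.ext (by simp <;> omega))), zero_mul]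
        · intro h; exact absurd (Finset.mem_univ _) h
      rw [hCLM]
      exact proj_hasFDerivAt _ ξ
    · have hfun : (fun x : Fin (2 * N - 1) → ℝ => xiToAB N x k)
          = fun x => x ⟨2 * (k : ℕ) - 1, by omega⟩ + x ⟨2 * (k : ℕ), by omega⟩ := by
        funext x; unfold xiToAB xiToA; rw [dif_pos hk, dif_neg h0]
      rw [hfun]
      have hCLM : (ContinuousLinearMap.proj k).comp L
          = (ContinuousLinearMap.proj (⟨2 * (k : ℕ) - 1, by omega⟩ : Fin (2 * N - 1))
              : (Fin (2 * N - 1) → ℝ) →L[ℝ] ℝ)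
            + (ContinuousLinearMap.proj (⟨2 * (k : ℕ), by omega⟩ : Fin (2 * N - 1))
              : (Fin (2 * N - 1) → ℝ) →L[ℝ] ℝ) := by
        ext v
        simp only [ContinuousLinearMap.comp_apply, ContinuousLinearMap.proj_apply,
          ContinuousLinearMap.add_apply]
        rw [happ]
        rw [Finset.sum_eq_add_of_mem (⟨2 * (k : ℕ) - 1, by omega⟩ : Fin (2 * N - 1))
          (⟨2 * (k : ℕ), by omega⟩ : Fin (2 * N - 1)) (Finset.mem_univ _) (Finset.mem_univ _)
          (by intro e; have := congrArg Fin.val e; simp at this; omega)]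
        · rw [jmat_rowA ξ _ hk h0, jmat_rowA ξ _ hk h0,
            if_pos (Or.inl (show ((⟨2 * (k : ℕ) - 1, by omega⟩ : Fin (2 * N - 1)) : ℕ) = 2 * (k : ℕ) - 1 from rfl)),
            if_pos (Or.inr (show ((⟨2 * (k : ℕ), by omega⟩ : Fin (2 * N - 1)) : ℕ) = 2 * (k : ℕ) from rfl))]
          ring
        · intro l _ hl
          rw [jmat_rowA ξ _ hk h0, if_neg, zero_mul]
          rintro (e | e)
          · exact hl.1 (Fin.ext (by simp <;> omega))
          · exact hl.2 (Fin.ext (by simp <;> omega))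
      rw [hCLM]
      exact (proj_hasFDerivAt _ ξ).add (proj_hasFDerivAt _ ξ)
  · set p : Fin (2 * N - 1) := ⟨2 * ((k : ℕ) - N), by omega⟩ with hp
    set q : Fin (2 * N - 1) := ⟨2 * ((k : ℕ) - N) + 1, by omega⟩ with hq
    have hfun : (fun x : Fin (2 * N - 1) → ℝ => xiToAB N x k)
        = fun x => x p * x q := by
      funext x; unfold xiToAB xiToB; rw [dif_neg hk]
    rw [hfun]
    have hmul := (proj_hasFDerivAt p ξ).mul (proj_hasFDerivAt q ξ)
    have hCLM : (ContinuousLinearMap.proj k).comp L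
        = ξ p • ContinuousLinearMap.proj q + ξ q • ContinuousLinearMap.proj p := by
      ext v
      simp only [ContinuousLinearMap.comp_apply, ContinuousLinearMap.proj_apply,
        ContinuousLinearMap.add_apply, ContinuousLinearMap.smul_apply, smul_eq_mul]
      rw [happ]
      rw [Finset.sum_eq_add_of_mem p q (Finset.mem_univ _) (Finset.mem_univ _)
        (by intro e; have := congrArg Fin.val e; rw [hp, hq] at this; simp at this)]
      · have hpv : (p : ℕ) = 2 * ((k : ℕ) - N) := rfl
        have hqv : (q : ℕ) = 2 * ((k : ℕ) - N) + 1 := rfl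
        rw [jmat_rowB ξ p hk, jmat_rowB ξ q hk, if_pos hpv, if_neg (by omega), if_pos hqv]
        ring
      · intro l _ hl
        rw [jmat_rowB ξ l hk, if_neg (fun e => hl.1 (Fin.ext (by simp [e, hp]))),
          if_neg (fun e => hl.2 (Fin.ext (by simp [e, hq]))), zero_mul]
    rw [hCLM]
    exact hmul

def chPerm (N : ℕ) (hN : 2 ≤ N) : Equiv.Perm (Fin (2 * N - 1)) where
  toFun p := if h : (p : ℕ) % 2 = 0 then ⟨(p : ℕ) / 2, by have := p.isLt; omega⟩
    else ⟨N + (p : ℕ) / 2, by have := p.isLt; omega⟩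
  invFun k := if h : (k : ℕ) < N then ⟨2 * (k : ℕ), by have := k.isLt; omega⟩
    else ⟨2 * ((k : ℕ) - N) + 1, by have := k.isLt; omega⟩
  left_inv p := by
    dsimp only
    by_cases h : (p : ℕ) % 2 = 0
    · rw [dif_pos h, dif_pos (show (((⟨(p : ℕ) / 2, _⟩ : Fin (2 * N - 1))) : ℕ) < N
        from by simp; have := p.isLt; omega)]
      exact Fin.ext (by simp <;> omega)
    · rw [dif_neg h, dif_neg (show ¬ (((⟨N + (p : ℕ) / 2, _⟩ : Fin (2 * N - 1))) : ℕ) < N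
        from by simp)]
      exact Fin.ext (by simp <;> omega)
  right_inv k := by
    dsimp only
    by_cases h : (k : ℕ) < N
    · rw [dif_pos h, dif_pos (show ((⟨2 * (k : ℕ), _⟩ : Fin (2 * N - 1)) : ℕ) % 2 = 0
        from by simp <;> omega)]
      exact Fin.ext (by simp <;> omega)
    · rw [dif_neg h, dif_neg (show ¬ ((⟨2 * ((k : ℕ) - N) + 1, _⟩ : Fin (2 * N - 1)) : ℕ) % 2 = 0
        from by simp <;> omega)]
      exact Fin.ext (by simp <;> omega)

lemma chPerm_val_even (N : ℕ) (hN : 2 ≤ N) (p : Fin (2 * N - 1)) (h : (p : ℕ) % 2 = 0) :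
    ((chPerm N hN p : Fin (2 * N - 1)) : ℕ) = (p : ℕ) / 2 := by
  show ((if h' : (p : ℕ) % 2 = 0 then _ else _ : Fin (2 * N - 1)) : ℕ) = _
  rw [dif_pos h]

lemma chPerm_val_odd (N : ℕ) (hN : 2 ≤ N) (p : Fin (2 * N - 1)) (h : ¬ (p : ℕ) % 2 = 0) :
    ((chPerm N hN p : Fin (2 * N - 1)) : ℕ) = N + (p : ℕ) / 2 := by
  show ((if h' : (p : ℕ) % 2 = 0 then _ else _ : Fin (2 * N - 1)) : ℕ) = _
  rw [dif_neg h]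

lemma det_jmat {N : ℕ} (hN : 2 ≤ N) (ξ : Fin (2 * N - 1) → ℝ) (hξ : ∀ i, 0 < ξ i) :
    |((jmat ξ).det)| = ∏ i : Fin (N - 1), ξ ⟨2 * (i : ℕ), by have := i.isLt; clear hN; omega⟩ := by
  set σ := chPerm N hN with hσ
  -- triangularity
  have htri : ((jmat ξ).submatrix σ id).BlockTriangular OrderDual.toDual := by
    intro p l hlt
    have hpl : (p : ℕ) < (l : ℕ) := hlt
    show jmat ξ (σ p) l = 0
    by_cases h : (p : ℕ) % 2 = 0
    · have hv := chPerm_val_even N hN p h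
      have hkN : ((σ p : Fin (2 * N - 1)) : ℕ) < N := by rw [hv]; have := p.isLt; omega
      by_cases h0 : ((σ p : Fin (2 * N - 1)) : ℕ) = 0
      · rw [jmat_row0 ξ l hkN h0]
        rw [if_neg (by rw [hv] at h0; omega)]
      · rw [jmat_rowA ξ l hkN h0]
        rw [if_neg (by rw [hv] at h0 ⊢; omega)]
    · have hv := chPerm_val_odd N hN p h
      have hkN : ¬ ((σ p : Fin (2 * N - 1)) : ℕ) < N := by rw [hv]; omega
      rw [jmat_rowB ξ l hkN]
      rw [if_neg (by rw [hv]; omega), if_neg (by rw [hv]; omega)]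
  have hdet' := Matrix.det_of_lowerTriangular _ htri
  have hperm := Matrix.det_permute σ (jmat ξ)
  -- diagonal entries
  have hdiag : ∀ p : Fin (2 * N - 1), ((jmat ξ).submatrix σ id) p p
      = if (p : ℕ) % 2 = 0 then 1 else ξ ⟨(p : ℕ) - 1, by have := p.isLt; omega⟩ := by
    intro p
    show jmat ξ (σ p) p = _
    by_cases h : (p : ℕ) % 2 = 0
    · have hv := chPerm_val_even N hN p h
      have hkN : ((σ p : Fin (2 * N - 1)) : ℕ) < N := by rw [hv]; have := p.isLt; omega
      rw [if_pos h]
      by_cases h0 : ((σ p : Fin (2 * N - 1)) : ℕ) = 0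
      · rw [jmat_row0 ξ p hkN h0, if_pos (by rw [hv] at h0; omega)]
      · rw [jmat_rowA ξ p hkN h0, if_pos (Or.inr (by rw [hv] at h0 ⊢; omega))]
    · have hv := chPerm_val_odd N hN p h
      have hkN : ¬ ((σ p : Fin (2 * N - 1)) : ℕ) < N := by rw [hv]; omega
      rw [if_neg h, jmat_rowB ξ p hkN]
      rw [if_neg (by rw [hv]; omega), if_pos (by rw [hv]; omega)]
      congr 1
      exact Fin.ext (by show 2 * (((σ p : Fin (2 * N - 1)) : ℕ) - N) = (p : ℕ) - 1; rw [hv]; omega)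
  -- product over diagonal
  have hprod : ∏ p : Fin (2 * N - 1), ((jmat ξ).submatrix σ id) p p
      = ∏ i : Fin (N - 1), ξ ⟨2 * (i : ℕ), by have := i.isLt; omega⟩ := by
    rw [Finset.prod_congr rfl (fun p _ => hdiag p)]
    rw [Finset.prod_ite (fun _ => (1 : ℝ)) _]
    rw [Finset.prod_const_one, one_mul]
    refine Finset.prod_bij' (fun p hp => (⟨((p : ℕ) - 1) / 2, by
        have := p.isLt; simp [Finset.mem_filter] at hp; omega⟩ : Fin (N - 1)))
      (fun i _ => (⟨2 * (i : ℕ) + 1, by have := i.isLt; omega⟩ : Fin (2 * N - 1)))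
      ?_ ?_ ?_ ?_ ?_
    · intro p hp; exact Finset.mem_univ _
    · intro i _
      simp [Finset.mem_filter]
    · intro p hp
      simp [Finset.mem_filter] at hp
      exact Fin.ext (by simp <;> omega)
    · intro i _
      exact Fin.ext (by simp <;> omega)
    · intro p hp
      simp [Finset.mem_filter] at hp
      congr 1
      exact Fin.ext (by simp <;> omega)
  -- combine
  rw [hdet', hprod] at hperm
  have habs : |((jmat ξ).det)| = ∏ i : Fin (N - 1), ξ ⟨2 * (i : ℕ), by have := i.isLt; omega⟩ := by
    have hpos : (0 : ℝ) < ∏ i : Fin (N - 1), ξ ⟨2 * (i : ℕ), by have := i.isLt; omega⟩ :=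
      Finset.prod_pos (fun i _ => hξ _)
    rcases Int.units_eq_one_or (Equiv.Perm.sign σ) with hs | hs <;> rw [hs] at hperm
    · simp at hperm
      rw [← hperm, abs_of_pos hpos]
    · simp at hperm
      rw [show (jmat ξ).det = -∏ i : Fin (N - 1), ξ ⟨2 * (i : ℕ), by have := i.isLt; omega⟩
          from by linarith, abs_neg, abs_of_pos hpos]
  exact habs

lemma xiToAB_A {N : ℕ} (ξ : Fin (2 * N - 1) → ℝ) (n : Fin N) (h : (n : ℕ) < 2 * N - 1) :
    xiToAB N ξ ⟨(n : ℕ), h⟩ = xiToA ξ n := by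
  unfold xiToAB
  rw [dif_pos (show ((⟨(n : ℕ), h⟩ : Fin (2 * N - 1)) : ℕ) < N from n.isLt)]

lemma xiToAB_B {N : ℕ} (ξ : Fin (2 * N - 1) → ℝ) (n : Fin (N - 1))
    (h : N + (n : ℕ) < 2 * N - 1) :
    xiToAB N ξ ⟨N + (n : ℕ), h⟩ = xiToB ξ n := by
  unfold xiToAB
  rw [dif_neg (show ¬ ((⟨N + (n : ℕ), h⟩ : Fin (2 * N - 1)) : ℕ) < N from by simp)]
  exact congrArg (xiToB ξ) (Fin.ext (by simp))

/-- bidiagonal Cholesky factorization of Jacobi matrices and the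
Jacobian of the reparametrization `ξ ↦ (a, b)`. -/
theorem cholesky_reparametrization (N : ℕ) (hN : 2 ≤ N) :
    (∀ ξ : Fin (2 * N - 1) → ℝ, (∀ i, 0 < ξ i) →
      bidiag ξ * (bidiag ξ)ᵀ = jacobiMatrix (xiToA ξ) (xiToB ξ)) ∧
    (∀ (a : Fin N → ℝ) (b : Fin (N - 1) → ℝ), (∀ i, 0 < b i) →
      (jacobiMatrix a b).PosDef →
      ∃! ξ : Fin (2 * N - 1) → ℝ, (∀ i, 0 < ξ i) ∧
        bidiag ξ * (bidiag ξ)ᵀ = jacobiMatrix a b) ∧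
    Set.InjOn (xiToAB N) {ξ | ∀ i, 0 < ξ i} ∧
    ContDiffOn ℝ 1 (xiToAB N) {ξ : Fin (2 * N - 1) → ℝ | ∀ i, 0 < ξ i} ∧
    ∀ ξ ∈ {ξ : Fin (2 * N - 1) → ℝ | ∀ i, 0 < ξ i},
      |LinearMap.det (fderiv ℝ (xiToAB N) ξ).toLinearMap|
        = ∏ i : Fin (N - 1), ξ ⟨2 * (i : ℕ), by have := i.isLt; omega⟩ := by
  have hfact := fun (ξ : Fin (2 * N - 1) → ℝ) (hξ : ∀ i, 0 < ξ i) =>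
    bidiag_mul_transpose ξ (fun i => (hξ i).le)
  refine ⟨hfact, ?_, ?_, ?_, ?_⟩
  · intro a b hb hJ
    have hd := dSeq_pos a b hb hJ
    set ξ0 : Fin (2 * N - 1) → ℝ := fun k => xiOf (aExt a) (bExt b) (k : ℕ) with hξ0
    have hpos : ∀ i, 0 < ξ0 i := xiOf_pos hN a b hb hd
    have hfact0 : bidiag ξ0 * (bidiag ξ0)ᵀ = jacobiMatrix a b := by
      rw [hfact ξ0 hpos, xiToA_xiOf hN a b, xiToB_xiOf hN a b hd]
    refine ⟨ξ0, ⟨hpos, hfact0⟩, ?_⟩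
    rintro ξ' ⟨hpos', hfact'⟩
    have h1 : jacobiMatrix (xiToA ξ') (xiToB ξ') = jacobiMatrix a b := by
      rw [← hfact ξ' hpos']; exact hfact'
    have h2 : jacobiMatrix (xiToA ξ0) (xiToB ξ0) = jacobiMatrix a b := by
      rw [← hfact ξ0 hpos]; exact hfact0
    have hble : ∀ i, (0:ℝ) ≤ b i := fun i => (hb i).le
    have hB' : ∀ i, 0 ≤ xiToB ξ' i := fun i => by
      unfold xiToB; exact (mul_pos (hpos' _) (hpos' _)).le
    have hB0 : ∀ i, 0 ≤ xiToB ξ0 i := fun i => by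
      unfold xiToB; exact (mul_pos (hpos _) (hpos _)).le
    obtain ⟨hA1, hB1⟩ := jacobi_inj hB' hble h1
    obtain ⟨hA2, hB2⟩ := jacobi_inj hB0 hble h2
    exact xi_inj hpos' (hA1.trans hA2.symm) (hB1.trans hB2.symm)
  · intro ξ hξ ξ' hξ' heq
    have hA : xiToA ξ = xiToA ξ' := by
      funext n
      have h := congrFun heq ⟨(n : ℕ), by have := n.isLt; omega⟩
      rw [xiToAB_A ξ n, xiToAB_A ξ' n] at h
      exact h
    have hB : xiToB ξ = xiToB ξ' := by
      funext n
      have h := congrFun heq ⟨N + (n : ℕ), by have := n.isLt; omega⟩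
      rw [xiToAB_B ξ n, xiToAB_B ξ' n] at h
      exact h
    exact xi_inj hξ hA hB
  · exact (xiToAB_contDiff N hN).contDiffOn
  · intro ξ hξ
    rw [(xiToAB_hasFDerivAt hN ξ).fderiv]
    have hcoe : (LinearMap.toContinuousLinearMap (Matrix.toLin' (jmat ξ))).toLinearMap
        = Matrix.toLin' (jmat ξ) := LinearMap.coe_toContinuousLinearMap _
    rw [hcoe, LinearMap.det_toLin']
    exact det_jmat hN ξ hξ
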